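/- For |q| < 1 and |z| < 1 (or as formal power series), ∑_{m≥0} z^m/(−q;q)_m = ((q;q)_∞/(−q;q)_∞) · ∑_{n≥0} (−1;q)_n q^n / ( (q;q)_n (z q^n; q)_∞ ). -/

import Mathlib

open Finset

open Filter Topology

namespace Heine


variable {q : ℂ}

/-- `E q t = ∏ (1 + t qᵏ)`. -/
noncomputable def E (q t : ℂ) : ℂ := ∏' k : ℕ, (1 + t * q ^ k)

/-- `S q a t = ∑ (−a;q)_n tⁿ / (q;q)_n`. -/
noncomputable def S (q a t : ℂ) : ℂ :=
  ∑' n : ℕ, (∏ i ∈ range n, (1 + a * q ^ i)) * t ^ n / ∏ i ∈ range n, (1 - q ^ (i + 1))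

lemma norm_tq (hq : ‖q‖ < 1) {t : ℂ} (ht : ‖t‖ < 1) (k : ℕ) : ‖t * q ^ k‖ < 1 := by
  rw [norm_mul, norm_pow]
  calc ‖t‖ * ‖q‖ ^ k ≤ ‖t‖ * 1 := by
        gcongr
        exact pow_le_one₀ (norm_nonneg q) hq.le
    _ < 1 := by simpa using ht

lemma factor_ne (hq : ‖q‖ < 1) {t : ℂ} (ht : ‖t‖ < 1) (k : ℕ) : 1 + t * q ^ k ≠ 0 := by
  intro h
  have : ‖t * q ^ k‖ = 1 := by
    have : t * q ^ k = -1 := by linear_combination h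
    rw [this]; simp
  exact absurd this (ne_of_lt (norm_tq hq ht k))

lemma summable_log (hq : ‖q‖ < 1) {t : ℂ} (ht : ‖t‖ < 1) :
    Summable fun k : ℕ => Complex.log (1 + t * q ^ k) := by
  apply Summable.of_norm_bounded
    (g := fun k => (‖t‖ * (1 - ‖t‖)⁻¹ / 2 + 1) * (‖t‖ * ‖q‖ ^ k))
    (((summable_geometric_of_lt_one (norm_nonneg q) hq).mul_left _).mul_left _)
  intro k
  have h1 : ‖t * q ^ k‖ < 1 := norm_tq hq ht k
  have hle : ‖t * q ^ k‖ ≤ ‖t‖ * ‖q‖ ^ k := by rw [norm_mul, norm_pow]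
  have h2 := Complex.norm_log_one_add_le h1
  have h3 : ‖t * q ^ k‖ ^ 2 * (1 - ‖t * q ^ k‖)⁻¹ / 2 + ‖t * q ^ k‖
      ≤ (‖t‖ * (1 - ‖t‖)⁻¹ / 2 + 1) * (‖t‖ * ‖q‖ ^ k) := by
    have hq0 : (0:ℝ) ≤ ‖q‖ ^ k := by positivity
    have hqk1 : ‖q‖ ^ k ≤ 1 := pow_le_one₀ (norm_nonneg q) hq.le
    have htk : ‖t * q ^ k‖ ≤ ‖t‖ := by
      calc ‖t * q ^ k‖ ≤ ‖t‖ * ‖q‖ ^ k := hle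
        _ ≤ ‖t‖ * 1 := by gcongr
        _ = ‖t‖ := mul_one _
    have hinv : (1 - ‖t * q ^ k‖)⁻¹ ≤ (1 - ‖t‖)⁻¹ := by
      apply inv_anti₀ (by linarith) (by linarith)
    have : ‖t * q ^ k‖ ^ 2 * (1 - ‖t * q ^ k‖)⁻¹ / 2
        ≤ (‖t‖ * (1 - ‖t‖)⁻¹ / 2) * (‖t‖ * ‖q‖ ^ k) := by
      rw [pow_two]
      calc ‖t * q ^ k‖ * ‖t * q ^ k‖ * (1 - ‖t * q ^ k‖)⁻¹ / 2
          ≤ ‖t‖ * (‖t‖ * ‖q‖ ^ k) * (1 - ‖t‖)⁻¹ / 2 := by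
            gcongr ?_ / 2
            apply mul_le_mul (mul_le_mul htk hle (norm_nonneg _) (norm_nonneg _)) hinv
              (inv_nonneg.2 (by linarith)) (by positivity)
        _ = (‖t‖ * (1 - ‖t‖)⁻¹ / 2) * (‖t‖ * ‖q‖ ^ k) := by ring
    nlinarith [hle]
  calc ‖Complex.log (1 + t * q ^ k)‖ ≤ _ := h2
    _ ≤ _ := h3

lemma mult (hq : ‖q‖ < 1) {t : ℂ} (ht : ‖t‖ < 1) :
    Multipliable fun k : ℕ => 1 + t * q ^ k := by
  exact Complex.multipliable_of_summable_log (summable_log hq ht)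

lemma E_tendsto (hq : ‖q‖ < 1) {t : ℂ} (ht : ‖t‖ < 1) :
    Tendsto (fun N : ℕ => ∏ k ∈ range N, (1 + t * q ^ k)) atTop (𝓝 (E q t)) :=
  (mult hq ht).hasProd.tendsto_prod_nat

/-- tail splitting -/
lemma E_split (hq : ‖q‖ < 1) {t : ℂ} (ht : ‖t‖ < 1) (m : ℕ) :
    E q t = (∏ i ∈ range m, (1 + t * q ^ i)) * E q (t * q ^ m) := by
  have hm : ‖t * q ^ m‖ < 1 := norm_tq hq ht m
  have hmul : Multipliable fun i : ℕ => 1 + t * q ^ (i + m) := by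
    refine (mult hq hm).congr fun i => ?_
    ring
  have := Multipliable.prod_mul_tprod_nat_mul' (f := fun k : ℕ => 1 + t * q ^ k) (k := m) hmul
  rw [E, ← this, E]
  congr 1
  refine tprod_congr fun i => ?_
  ring





noncomputable def K (q a : ℂ) : ℝ :=
  Real.exp (‖a‖ * (1 - ‖q‖)⁻¹ + ‖q‖ * (1 - ‖q‖)⁻¹ * (1 - ‖q‖)⁻¹)

lemma geom_partial (hq : ‖q‖ < 1) (n : ℕ) : ∑ i ∈ range n, ‖q‖ ^ i ≤ (1 - ‖q‖)⁻¹ := by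
  refine le_trans (Summable.sum_le_tsum (range n) (fun i _ => by positivity)
    (summable_geometric_of_lt_one (norm_nonneg q) hq)) ?_
  rw [tsum_geometric_of_lt_one (norm_nonneg q) hq]

lemma P_bound (hq : ‖q‖ < 1) (a : ℂ) (n : ℕ) :
    ‖∏ i ∈ range n, (1 + a * q ^ i)‖ ≤ Real.exp (‖a‖ * (1 - ‖q‖)⁻¹) := by
  rw [norm_prod]
  calc ∏ i ∈ range n, ‖1 + a * q ^ i‖
      ≤ ∏ i ∈ range n, Real.exp (‖a‖ * ‖q‖ ^ i) := by
        apply Finset.prod_le_prod (fun i _ => norm_nonneg _)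
        intro i _
        calc ‖1 + a * q ^ i‖ ≤ ‖(1:ℂ)‖ + ‖a * q ^ i‖ := norm_add_le _ _
          _ = 1 + ‖a‖ * ‖q‖ ^ i := by rw [norm_one, norm_mul, norm_pow]
          _ ≤ Real.exp (‖a‖ * ‖q‖ ^ i) := by
              have := Real.add_one_le_exp (‖a‖ * ‖q‖ ^ i); linarith
    _ = Real.exp (∑ i ∈ range n, ‖a‖ * ‖q‖ ^ i) := (Real.exp_sum _ _).symm
    _ ≤ Real.exp (‖a‖ * (1 - ‖q‖)⁻¹) := by
        apply Real.exp_le_exp.2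
        rw [← mul_sum]
        gcongr
        exact geom_partial hq n

lemma D_lb (hq : ‖q‖ < 1) (n : ℕ) :
    Real.exp (-(‖q‖ * (1 - ‖q‖)⁻¹ * (1 - ‖q‖)⁻¹)) ≤ ‖∏ i ∈ range n, (1 - q ^ (i + 1))‖ := by
  rw [norm_prod]
  have hq1 : 0 < 1 - ‖q‖ := by linarith
  have hfac : ∀ i : ℕ, Real.exp (-(‖q‖ ^ (i + 1) * (1 - ‖q‖)⁻¹)) ≤ ‖1 - q ^ (i + 1)‖ := by
    intro i
    set x : ℝ := ‖q‖ ^ (i + 1) with hxdef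
    have hx0 : 0 ≤ x := by positivity
    have hx : x ≤ ‖q‖ := pow_le_of_le_one (norm_nonneg q) hq.le (Nat.succ_ne_zero i)
    have h1x : 0 < 1 - x := by linarith
    have hstep : Real.exp (-(x * (1 - ‖q‖)⁻¹)) ≤ 1 - x := by
      rw [Real.exp_neg, inv_le_comm₀ (Real.exp_pos _) h1x]
      have hexp := Real.add_one_le_exp (x * (1 - ‖q‖)⁻¹)
      have h2 : (1 - x)⁻¹ ≤ x * (1 - ‖q‖)⁻¹ + 1 := by
        rw [← one_div, div_le_iff₀ h1x]
        have hinv0 : 0 ≤ (1 - ‖q‖)⁻¹ := by positivity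
        have h3 : x * (1 - ‖q‖)⁻¹ * (1 - ‖q‖) = x := inv_mul_cancel_right₀ (ne_of_gt hq1) x
        have h4 := mul_le_mul_of_nonneg_left (show (1:ℝ) - ‖q‖ ≤ 1 - x by linarith)
          (mul_nonneg hx0 hinv0)
        nlinarith
      linarith
    refine hstep.trans ?_
    calc 1 - x = ‖(1:ℂ)‖ - ‖q ^ (i + 1)‖ := by rw [norm_one, norm_pow]
      _ ≤ ‖1 - q ^ (i + 1)‖ := norm_sub_norm_le _ _
  calc Real.exp (-(‖q‖ * (1 - ‖q‖)⁻¹ * (1 - ‖q‖)⁻¹))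
      ≤ Real.exp (∑ i ∈ range n, -(‖q‖ ^ (i + 1) * (1 - ‖q‖)⁻¹)) := by
        apply Real.exp_le_exp.2
        have hsum : ∑ i ∈ range n, ‖q‖ ^ (i + 1) * (1 - ‖q‖)⁻¹
            ≤ ‖q‖ * (1 - ‖q‖)⁻¹ * (1 - ‖q‖)⁻¹ := by
          rw [← Finset.sum_mul]
          gcongr
          calc ∑ i ∈ range n, ‖q‖ ^ (i + 1) = ‖q‖ * ∑ i ∈ range n, ‖q‖ ^ i := by
                rw [Finset.mul_sum]; exact Finset.sum_congr rfl fun i _ => pow_succ' _ _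
            _ ≤ ‖q‖ * (1 - ‖q‖)⁻¹ := by
                have := geom_partial hq n
                gcongr
        rw [show (∑ i ∈ range n, -(‖q‖ ^ (i + 1) * (1 - ‖q‖)⁻¹))
            = -(∑ i ∈ range n, ‖q‖ ^ (i + 1) * (1 - ‖q‖)⁻¹) by
          rw [Finset.sum_neg_distrib]]
        exact neg_le_neg hsum
    _ = ∏ i ∈ range n, Real.exp (-(‖q‖ ^ (i + 1) * (1 - ‖q‖)⁻¹)) := Real.exp_sum _ _
    _ ≤ ∏ i ∈ range n, ‖1 - q ^ (i + 1)‖ := by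
        apply Finset.prod_le_prod (fun i _ => (Real.exp_pos _).le) (fun i _ => hfac i)



lemma D_ne (hq : ‖q‖ < 1) (n : ℕ) : (∏ i ∈ range n, (1 - q ^ (i + 1))) ≠ 0 := by
  rw [Finset.prod_ne_zero_iff]
  intro i _
  have h := factor_ne hq (t := -q) (by simpa using hq) i
  intro h0
  apply h
  linear_combination h0

lemma term_bound (hq : ‖q‖ < 1) (a t : ℂ) (n : ℕ) :
    ‖(∏ i ∈ range n, (1 + a * q ^ i)) * t ^ n / ∏ i ∈ range n, (1 - q ^ (i + 1))‖
      ≤ K q a * ‖t‖ ^ n := by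
  rw [norm_div, norm_mul, norm_pow]
  have h1 := P_bound hq a n
  have h2 := D_lb hq n
  have h3 : (0:ℝ) < Real.exp (-(‖q‖ * (1 - ‖q‖)⁻¹ * (1 - ‖q‖)⁻¹)) := Real.exp_pos _
  calc ‖∏ i ∈ range n, (1 + a * q ^ i)‖ * ‖t‖ ^ n / ‖∏ i ∈ range n, (1 - q ^ (i + 1))‖
      ≤ Real.exp (‖a‖ * (1 - ‖q‖)⁻¹) * ‖t‖ ^ n
          / Real.exp (-(‖q‖ * (1 - ‖q‖)⁻¹ * (1 - ‖q‖)⁻¹)) := by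
        apply div_le_div₀ (by positivity) (mul_le_mul_of_nonneg_right h1 (by positivity)) h3 h2
    _ = K q a * ‖t‖ ^ n := by
        rw [K, Real.exp_add, Real.exp_neg]
        field_simp

lemma summable_S (hq : ‖q‖ < 1) (a : ℂ) {t : ℂ} (ht : ‖t‖ < 1) :
    Summable fun n : ℕ =>
      (∏ i ∈ range n, (1 + a * q ^ i)) * t ^ n / ∏ i ∈ range n, (1 - q ^ (i + 1)) :=
  Summable.of_norm_bounded ((summable_geometric_of_lt_one (norm_nonneg t) ht).mul_left (K q a))
    (term_bound hq a t)

lemma S_sub_one (hq : ‖q‖ < 1) (a : ℂ) {t s : ℂ} (ht : ‖t‖ < 1) (hs : ‖s‖ ≤ ‖t‖) :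
    ‖S q a s - 1‖ ≤ K q a * (1 - ‖t‖)⁻¹ * ‖s‖ := by
  have hs1 : ‖s‖ < 1 := lt_of_le_of_lt hs ht
  have hsum := summable_S hq a hs1
  have h0 : S q a s = 1 + ∑' n : ℕ,
      (∏ i ∈ range (n + 1), (1 + a * q ^ i)) * s ^ (n + 1)
        / ∏ i ∈ range (n + 1), (1 - q ^ (i + 1)) := by
    rw [S, Summable.tsum_eq_zero_add hsum]
    simp
  rw [h0, add_sub_cancel_left]
  have hbound : ∀ n : ℕ,
      ‖(∏ i ∈ range (n + 1), (1 + a * q ^ i)) * s ^ (n + 1)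
        / ∏ i ∈ range (n + 1), (1 - q ^ (i + 1))‖ ≤ (K q a * ‖s‖) * ‖t‖ ^ n := by
    intro n
    refine (term_bound hq a s (n + 1)).trans ?_
    rw [pow_succ', ← mul_assoc]
    have hK : (0:ℝ) ≤ K q a := (Real.exp_pos _).le
    have := pow_le_pow_left₀ (norm_nonneg s) hs n
    exact mul_le_mul_of_nonneg_left this (by positivity)
  have := tsum_of_norm_bounded ((hasSum_geometric_of_lt_one (norm_nonneg t) ht).mul_left
    (K q a * ‖s‖)) hbound
  calc ‖_‖ ≤ K q a * ‖s‖ * (1 - ‖t‖)⁻¹ := this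
    _ = K q a * (1 - ‖t‖)⁻¹ * ‖s‖ := by ring

lemma funcEq (hq : ‖q‖ < 1) (a : ℂ) {s : ℂ} (hs : ‖s‖ < 1) :
    (1 - s) * S q a s = (1 + a * s) * S q a (q * s) := by
  have hqs : ‖q * s‖ < 1 := by
    rw [norm_mul]
    calc ‖q‖ * ‖s‖ ≤ 1 * ‖s‖ := mul_le_mul_of_nonneg_right hq.le (norm_nonneg s)
      _ = ‖s‖ := one_mul _
      _ < 1 := hs
  set P : ℕ → ℂ := fun n => ∏ i ∈ range n, (1 + a * q ^ i) with hP
  set D : ℕ → ℂ := fun n => ∏ i ∈ range n, (1 - q ^ (i + 1)) with hD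
  set f : ℕ → ℂ := fun n => P n * s ^ n / D n with hf
  set g : ℕ → ℂ := fun n => P n * (q * s) ^ n / D n with hg
  have hfs : Summable f := summable_S hq a hs
  have hgs : Summable g := summable_S hq a hqs
  have e1 : ∑' n, (f n - g n) = ∑' n, (s * f n + a * s * g n) := by
    rw [Summable.tsum_eq_zero_add (hfs.sub hgs)]
    have e0 : f 0 - g 0 = 0 := by simp [hf, hg]
    rw [e0, zero_add]
    refine tsum_congr fun n => ?_
    have hDn : D n ≠ 0 := D_ne hq n
    have hDn1 : D (n + 1) ≠ 0 := D_ne hq (n + 1)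
    have hDsucc : D (n + 1) = D n * (1 - q ^ (n + 1)) := prod_range_succ _ _
    have hPsucc : P (n + 1) = P n * (1 + a * q ^ n) := prod_range_succ _ _
    have hq1 : (1 : ℂ) - q ^ (n + 1) ≠ 0 := by
      intro h0
      exact factor_ne hq (t := -q) (by simpa using hq) n (by linear_combination h0)
    simp only [hf, hg]
    rw [hDsucc, hPsucc]
    field_simp
    ring
  have hsf : Summable fun n => s * f n := hfs.mul_left s
  have hsg : Summable fun n => a * s * g n := hgs.mul_left (a * s)
  have e2 : ∑' n, f n - ∑' n, g n = ∑' n, (s * f n) + ∑' n, (a * s * g n) := by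
    rw [← Summable.tsum_sub hfs hgs, ← Summable.tsum_add hsf hsg]
    exact e1
  have hSf : S q a s = ∑' n, f n := rfl
  have hSg : S q a (q * s) = ∑' n, g n := rfl
  have h3 : ∑' n, (s * f n) = s * ∑' n, f n := tsum_mul_left
  have h4 : ∑' n, (a * s * g n) = (a * s) * ∑' n, g n := tsum_mul_left
  rw [h3, h4] at e2
  rw [hSf, hSg]
  linear_combination e2

lemma key (hq : ‖q‖ < 1) (a : ℂ) {t : ℂ} (ht : ‖t‖ < 1) (hat :‖a * t‖ < 1) :
    S q a t * E q (-t) = E q (a * t) := by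
  have hind : ∀ N : ℕ, S q a t * ∏ k ∈ range N, (1 + -t * q ^ k)
      = (∏ k ∈ range N, (1 + a * t * q ^ k)) * S q a (q ^ N * t) := by
    intro N
    induction N with
    | zero => simp
    | succ n ih =>
      have hsn : ‖q ^ n * t‖ < 1 := by
        rw [mul_comm]; exact norm_tq hq ht n
      have hfe := funcEq hq a hsn
      have harg : q * (q ^ n * t) = q ^ (n + 1) * t := by ring
      rw [harg] at hfe
      rw [prod_range_succ, prod_range_succ, ← mul_assoc, ih]
      linear_combination (∏ k ∈ range n, (1 + a * t * q ^ k)) * hfe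
        + (q ^ n * t + -t * q ^ n) * (∏ k ∈ range n, (1 + a * t * q ^ k)) * S q a (q ^ n * t)
  have hnt : ‖-t‖ < 1 := by simpa using ht
  have h1 : Tendsto (fun N : ℕ => S q a t * ∏ k ∈ range N, (1 + -t * q ^ k)) atTop
      (𝓝 (S q a t * E q (-t))) := (E_tendsto hq hnt).const_mul _
  have hS1 : Tendsto (fun N : ℕ => S q a (q ^ N * t)) atTop (𝓝 1) := by
    have hb : ∀ N : ℕ, ‖S q a (q ^ N * t) - 1‖ ≤ (K q a * (1 - ‖t‖)⁻¹ * ‖t‖) * ‖q‖ ^ N := by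
      intro N
      have hsle : ‖q ^ N * t‖ ≤ ‖t‖ := by
        rw [norm_mul, norm_pow]
        calc ‖q‖ ^ N * ‖t‖ ≤ 1 * ‖t‖ := by
              gcongr
              exact pow_le_one₀ (norm_nonneg q) hq.le
          _ = ‖t‖ := one_mul _
      refine (S_sub_one hq a ht hsle).trans ?_
      rw [norm_mul, norm_pow]
      exact le_of_eq (by ring)
    have h0 : Tendsto (fun N : ℕ => S q a (q ^ N * t) - 1) atTop (𝓝 0) :=
      squeeze_zero_norm hb (by
        simpa using (tendsto_pow_atTop_nhds_zero_of_norm_lt_one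
          (by simpa using hq)).const_mul (K q a * (1 - ‖t‖)⁻¹ * ‖t‖))
    have := h0.add_const 1
    simpa using this
  have h2 : Tendsto (fun N : ℕ => (∏ k ∈ range N, (1 + a * t * q ^ k)) * S q a (q ^ N * t))
      atTop (𝓝 (E q (a * t) * 1)) := (E_tendsto hq hat).mul hS1
  have := tendsto_nhds_unique (h1.congr hind) h2
  rw [this, mul_one]

lemma E_zero : E q 0 = 1 := by
  rw [E]
  simp

lemma euler (hq : ‖q‖ < 1) {t : ℂ} (ht : ‖t‖ < 1) : S q 0 t * E q (-t) = 1 := by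
  have := key hq 0 ht (by simp)
  rwa [zero_mul, E_zero] at this

lemma E_neg_ne (hq : ‖q‖ < 1) {t : ℂ} (ht : ‖t‖ < 1) : E q (-t) ≠ 0 := by
  intro h
  have := euler hq ht
  rw [h, mul_zero] at this
  exact zero_ne_one this

lemma E_ne (hq : ‖q‖ < 1) {t : ℂ} (ht : ‖t‖ < 1) : E q t ≠ 0 := by
  have := E_neg_ne hq (t := -t) (by simpa using ht)
  simpa using this

lemma S0_inv (hq : ‖q‖ < 1) {t : ℂ} (ht : ‖t‖ < 1) : S q 0 t = (E q (-t))⁻¹ :=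
  eq_inv_of_mul_eq_one_left (euler hq ht)


end Heine

open Heine

/-- For `|q| < 1` and `|z| < 1`,
`∑_{m≥0} zᵐ/(−q;q)_m = ((q;q)_∞/(−q;q)_∞) · ∑_{n≥0} (−1;q)_n qⁿ / ((q;q)_n (z qⁿ;q)_∞)`. -/
theorem heine_transformed_sum (q z : ℂ) (hq : ‖q‖ < 1) (hz : ‖z‖ < 1) :
    ∑' m : ℕ, z ^ m / ∏ i ∈ range m, (1 + q ^ (i + 1)) =
      (∏' k : ℕ, (1 - q ^ (k + 1))) / (∏' k : ℕ, (1 + q ^ (k + 1))) *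
        ∑' n : ℕ, (∏ i ∈ range n, (1 + q ^ i)) * q ^ n /
          ((∏ i ∈ range n, (1 - q ^ (i + 1))) * ∏' k : ℕ, (1 - z * q ^ (n + k))) := by
  set D : ℕ → ℂ := fun n => ∏ i ∈ range n, (1 - q ^ (i + 1)) with hD
  set Q : ℕ → ℂ := fun m => ∏ i ∈ range m, (1 + q ^ (i + 1)) with hQ
  set P : ℕ → ℂ := fun n => ∏ i ∈ range n, (1 + q ^ i) with hPdef
  set G : ℕ → ℕ → ℂ := fun n m => (P n * q ^ n / D n) * ((z * q ^ n) ^ m / D m) with hG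
  have hnegq : ‖(-q : ℂ)‖ < 1 := by simpa using hq
  have hqm1 : ∀ m : ℕ, ‖(q ^ (m + 1) : ℂ)‖ < 1 := by
    intro m
    rw [norm_pow]
    exact lt_of_le_of_lt (pow_le_of_le_one (norm_nonneg q) hq.le (Nat.succ_ne_zero m)) hq
  have hnqm1 : ∀ m : ℕ, ‖(-(q ^ (m + 1)) : ℂ)‖ < 1 := by intro m; simpa using hqm1 m
  have hzn : ∀ n : ℕ, ‖z * q ^ n‖ < 1 := fun n => norm_tq hq hz n
  have hQne : ∀ m : ℕ, Q m ≠ 0 := by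
    intro m
    rw [hQ, Finset.prod_ne_zero_iff]
    intro i _
    have h := factor_ne hq (t := q) hq i
    intro h0
    apply h
    linear_combination h0
  have hDne : ∀ n : ℕ, D n ≠ 0 := fun n => D_ne hq n
  -- rewriting infinite products as E
  have st1 : (∏' k : ℕ, (1 - q ^ (k + 1))) = E q (-q) := tprod_congr fun k => by ring
  have st2 : (∏' k : ℕ, (1 + q ^ (k + 1))) = E q q := tprod_congr fun k => by ring
  have st3 : ∀ n : ℕ, (∏' k : ℕ, (1 - z * q ^ (n + k))) = E q (-(z * q ^ n)) :=
    fun n => tprod_congr fun k => by ring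
  -- S with a = 0
  have hS0 : ∀ t : ℂ, S q 0 t = ∑' m : ℕ, t ^ m / D m := by
    intro t
    exact tsum_congr fun m => by simp [hD]
  -- Step 1 : the inner sum as a double sum
  have step1 : ∀ n : ℕ, P n * q ^ n / (D n * ∏' k : ℕ, (1 - z * q ^ (n + k)))
      = ∑' m : ℕ, G n m := by
    intro n
    rw [st3 n]
    have hEn : E q (-(z * q ^ n)) ≠ 0 := E_neg_ne hq (hzn n)
    have h1 : P n * q ^ n / (D n * E q (-(z * q ^ n)))
        = (P n * q ^ n / D n) * (E q (-(z * q ^ n)))⁻¹ := by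
      rw [← div_div, div_eq_mul_inv]
    rw [h1, ← S0_inv hq (hzn n), hS0 (z * q ^ n), ← tsum_mul_left]
  -- Summability of the double family
  have hGb : ∀ p : ℕ × ℕ, ‖G p.1 p.2‖ ≤ (K q 1 * ‖q‖ ^ p.1) * (K q 0 * ‖z‖ ^ p.2) := by
    rintro ⟨n, m⟩
    rw [hG, norm_mul]
    have hb1 : ‖P n * q ^ n / D n‖ ≤ K q 1 * ‖q‖ ^ n := by
      have h := term_bound hq 1 q n
      simp only [one_mul] at h
      simp only [hPdef, hD]
      exact h
    have hb2 : ‖(z * q ^ n) ^ m / D m‖ ≤ K q 0 * ‖z‖ ^ m := by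
      have h := term_bound hq 0 (z * q ^ n) m
      simp only [zero_mul, add_zero, Finset.prod_const_one, one_mul] at h
      simp only [hD]
      refine h.trans ?_
      have hK0 : (0:ℝ) ≤ K q 0 := (Real.exp_pos _).le
      have hzq : ‖z * q ^ n‖ ≤ ‖z‖ := by
        rw [norm_mul, norm_pow]
        calc ‖z‖ * ‖q‖ ^ n ≤ ‖z‖ * 1 := by
              gcongr
              exact pow_le_one₀ (norm_nonneg q) hq.le
          _ = ‖z‖ := mul_one _
      exact mul_le_mul_of_nonneg_left (pow_le_pow_left₀ (norm_nonneg _) hzq m) hK0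
    exact mul_le_mul hb1 hb2 (norm_nonneg _)
      (mul_nonneg (Real.exp_pos _).le (by positivity))
  have hGsum : Summable (Function.uncurry G) := by
    apply Summable.of_norm_bounded
      (((summable_geometric_of_lt_one (norm_nonneg q) hq).mul_left (K q 1)).mul_of_nonneg
        ((summable_geometric_of_lt_one (norm_nonneg z) hz).mul_left (K q 0))
        (fun n => mul_nonneg (Real.exp_pos _).le (pow_nonneg (norm_nonneg q) n))
        (fun m => mul_nonneg (Real.exp_pos _).le (pow_nonneg (norm_nonneg z) m)))
    exact hGb
  have hG1 : ∀ n : ℕ, Summable fun m => G n m := fun n => hGsum.prod_factor n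
  have hG2 : ∀ m : ℕ, Summable fun n => G n m := fun m => hGsum.prod_symm.prod_factor m
  have swap : ∑' (n : ℕ) (m : ℕ), G n m = ∑' (m : ℕ) (n : ℕ), G n m :=
    (Summable.tsum_comm' hGsum hG1 hG2).symm
  -- Step 3 : inner sum over n
  have step3 : ∀ m : ℕ, ∑' n : ℕ, G n m = (z ^ m / D m) * S q 1 (q ^ (m + 1)) := by
    intro m
    have : ∀ n : ℕ, G n m
        = (z ^ m / D m) * ((∏ i ∈ range n, (1 + 1 * q ^ i)) * (q ^ (m + 1)) ^ n / D n) := by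
      intro n
      simp only [hG, hPdef, hD, one_mul]
      have hDn := D_ne hq n
      have hDm := D_ne hq m
      field_simp
      ring
    rw [tsum_congr this, tsum_mul_left, S]
  -- Step 4 : value of S q 1 (q^(m+1))
  have step4 : ∀ m : ℕ, S q 1 (q ^ (m + 1)) = E q (q ^ (m + 1)) / E q (-(q ^ (m + 1))) := by
    intro m
    have h := key hq 1 (hqm1 m) (by simpa using hqm1 m)
    rw [one_mul] at h
    exact (eq_div_iff (E_neg_ne hq (hqm1 m))).2 h
  -- Step 5 : tail splittings
  have split1 : ∀ m : ℕ, E q (-q) = D m * E q (-(q ^ (m + 1))) := by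
    intro m
    have h := E_split hq hnegq m
    have harg : (-q) * q ^ m = -(q ^ (m + 1)) := by ring
    rw [harg] at h
    rw [h]
    simp only [hD]
    congr 1
    exact Finset.prod_congr rfl fun i _ => by ring
  have split2 : ∀ m : ℕ, E q q = Q m * E q (q ^ (m + 1)) := by
    intro m
    have h := E_split hq hq m
    have harg : q * q ^ m = q ^ (m + 1) := by ring
    rw [harg] at h
    rw [h]
    simp only [hQ]
    congr 1
    exact Finset.prod_congr rfl fun i _ => by ring
  -- Step 6 : final per-m identity
  have step6 : ∀ m : ℕ, E q (-q) / E q q * ((z ^ m / D m) * (E q (q ^ (m + 1)) / E q (-(q ^ (m + 1)))))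
      = z ^ m / Q m := by
    intro m
    rw [split1 m, split2 m]
    have h1 := hDne m
    have h2 := hQne m
    have h3 : E q (q ^ (m + 1)) ≠ 0 := E_ne hq (hqm1 m)
    have h4 : E q (-(q ^ (m + 1))) ≠ 0 := E_neg_ne hq (hqm1 m)
    field_simp
  -- Assemble
  rw [st1, st2]
  calc ∑' m : ℕ, z ^ m / Q m
      = ∑' m : ℕ, E q (-q) / E q q
          * ((z ^ m / D m) * (E q (q ^ (m + 1)) / E q (-(q ^ (m + 1))))) :=
        tsum_congr fun m => (step6 m).symm
    _ = E q (-q) / E q q * ∑' m : ℕ, (z ^ m / D m) * (E q (q ^ (m + 1)) / E q (-(q ^ (m + 1)))) :=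
        tsum_mul_left
    _ = E q (-q) / E q q * ∑' m : ℕ, (z ^ m / D m) * S q 1 (q ^ (m + 1)) :=
        congrArg (fun w => E q (-q) / E q q * w) (tsum_congr fun m => by rw [step4 m])
    _ = E q (-q) / E q q * ∑' (m : ℕ) (n : ℕ), G n m :=
        congrArg (fun w => E q (-q) / E q q * w) (tsum_congr fun m => (step3 m).symm)
    _ = E q (-q) / E q q * ∑' (n : ℕ) (m : ℕ), G n m := by rw [← swap]
    _ = E q (-q) / E q q * ∑' n : ℕ, P n * q ^ n / (D n * ∏' k : ℕ, (1 - z * q ^ (n + k))) :=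
        congrArg (fun w => E q (-q) / E q q * w) (tsum_congr fun n => (step1 n).symm)
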